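/- Let m be a natural number, ε ≥ 0 a real number, and let P and P' be two probability distributions on {0,1}^m (nonnegative real-valued functions on (Fin m → ZMod 2) each summing to 1). If for every string X ∈ {0,1}^m one has |P_{X·Z}(0) − P'_{X·Z}(0)| ≤ ε, where P_{X·Z}(0) is the P-probability that the parity bit Σ_i X_i Z_i equals 0 (mod 2), then the L2 distance between the distributions satisfies (Σ_{z ∈ {0,1}^m} (P(z) − P'(z))²)^{1/2} ≤ 2ε. -/
import Mathlib

noncomputable def eSign : ZMod 2 → ℝ := fun a => if a = 0 then 1 else -1

lemma eSign_zero : eSign 0 = 1 := by simp [eSign]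

lemma eSign_add (a b : ZMod 2) : eSign (a + b) = eSign a * eSign b := by
  rcases (by decide : ∀ x : ZMod 2, x = 0 ∨ x = 1) a with ha | ha <;>
    rcases (by decide : ∀ x : ZMod 2, x = 0 ∨ x = 1) b with hb | hb <;>
      subst ha <;> subst hb <;>
        simp only [show ((0:ZMod 2)+0=0) from by decide, show ((0:ZMod 2)+1=1) from by decide,
          show ((1:ZMod 2)+0=1) from by decide, show ((1:ZMod 2)+1=0) from by decide] <;>
        norm_num [eSign]

lemma eSign_sum {ι : Type*} (s : Finset ι) (f : ι → ZMod 2) :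
    eSign (∑ i ∈ s, f i) = ∏ i ∈ s, eSign (f i) := by
  classical
  induction s using Finset.cons_induction with
  | empty => simp [eSign_zero]
  | cons a s ha ih => rw [Finset.sum_cons, Finset.prod_cons, eSign_add, ih]

lemma char_sum (m : ℕ) (w : Fin m → ZMod 2) :
    ∑ X : Fin m → ZMod 2, eSign (∑ i, X i * w i) = if w = 0 then (2:ℝ)^m else 0 := by
  classical
  have h1 : ∀ X : Fin m → ZMod 2, eSign (∑ i, X i * w i) = ∏ i, eSign (X i * w i) :=
    fun X => eSign_sum _ _
  simp only [h1]
  rw [← Fintype.prod_sum (fun i (x : ZMod 2) => eSign (x * w i))]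
  have h2 : ∀ i, ∑ x : ZMod 2, eSign (x * w i) = 1 + eSign (w i) := by
    intro i
    rw [show (Finset.univ : Finset (ZMod 2)) = {0, 1} by decide]
    rw [Finset.sum_insert (by decide), Finset.sum_singleton]
    simp [eSign_zero]
  simp only [h2]
  by_cases hw : w = 0
  · subst hw; norm_num [eSign_zero]
  · rw [if_neg hw]
    obtain ⟨i, hi⟩ : ∃ i, w i ≠ 0 := by
      by_contra hc; push_neg at hc; exact hw (funext hc)
    refine Finset.prod_eq_zero (Finset.mem_univ i) ?_
    simp [eSign, hi]

/-- If all parity-bit marginals of two probability distributions on {0,1}^m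
are ε-close, then the L2 distance between the distributions is at most 2ε. -/
theorem l2_dist_le_of_parity_marginals_close
    (m : ℕ) (ε : ℝ) (hε : 0 ≤ ε) (P P' : (Fin m → ZMod 2) → ℝ)
    (hP0 : ∀ z, 0 ≤ P z) (hP'0 : ∀ z, 0 ≤ P' z)
    (hP1 : ∑ z, P z = 1) (hP'1 : ∑ z, P' z = 1)
    (h : ∀ X : Fin m → ZMod 2,
      |(∑ z ∈ Finset.univ.filter (fun z : Fin m → ZMod 2 => (∑ i, X i * z i) = 0), P z) -
       (∑ z ∈ Finset.univ.filter (fun z : Fin m → ZMod 2 => (∑ i, X i * z i) = 0), P' z)|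
        ≤ ε) :
    Real.sqrt (∑ z, (P z - P' z) ^ 2) ≤ 2 * ε := by
  classical
  set d : (Fin m → ZMod 2) → ℝ := fun z => P z - P' z with hd
  have hd0 : ∑ z, d z = 0 := by
    simp only [hd, Finset.sum_sub_distrib, hP1, hP'1, sub_self]
  set F : (Fin m → ZMod 2) → ℝ := fun X => ∑ z, eSign (∑ i, X i * z i) * d z with hF
  -- bound each Fourier coefficient
  have hFb : ∀ X, |F X| ≤ 2 * ε := by
    intro X
    set p : (Fin m → ZMod 2) → Prop := fun z => (∑ i, X i * z i) = 0 with hp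
    have hsplit : F X = (∑ z ∈ Finset.univ.filter p, d z)
        - ∑ z ∈ Finset.univ.filter (fun z => ¬ p z), d z := by
      show (∑ z, eSign (∑ i, X i * z i) * d z) = _
      rw [← Finset.sum_filter_add_sum_filter_not Finset.univ p
        (fun z => eSign (∑ i, X i * z i) * d z)]
      congr 1
      · refine Finset.sum_congr rfl fun z hz => ?_
        rw [Finset.mem_filter] at hz
        rw [hz.2, eSign_zero, one_mul]
      · rw [← Finset.sum_neg_distrib]
        refine Finset.sum_congr rfl fun z hz => ?_
        rw [Finset.mem_filter] at hz
        rw [show eSign (∑ i, X i * z i) = -1 from if_neg hz.2]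
        ring
    have htot : (∑ z ∈ Finset.univ.filter p, d z)
        + ∑ z ∈ Finset.univ.filter (fun z => ¬ p z), d z = 0 := by
      rw [Finset.sum_filter_add_sum_filter_not]; exact hd0
    have h2 : F X = 2 * ∑ z ∈ Finset.univ.filter p, d z := by
      rw [hsplit]; linarith
    have hdd : (∑ z ∈ Finset.univ.filter p, d z)
        = (∑ z ∈ Finset.univ.filter p, P z) - ∑ z ∈ Finset.univ.filter p, P' z := by
      simp [hd, Finset.sum_sub_distrib]
    rw [h2, abs_mul, abs_two, hdd]
    have := h X
    nlinarith [abs_nonneg ((∑ z ∈ Finset.univ.filter p, P z) - ∑ z ∈ Finset.univ.filter p, P' z)]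
  -- Parseval
  have pars : ∑ X : Fin m → ZMod 2, (F X) ^ 2 = 2 ^ m * ∑ z, d z ^ 2 := by
    have expand : ∀ X : Fin m → ZMod 2, (F X) ^ 2
        = ∑ z, ∑ z', eSign (∑ i, X i * (z i + z' i)) * (d z * d z') := by
      intro X
      rw [hF, sq, Finset.sum_mul_sum]
      refine Finset.sum_congr rfl fun z _ => Finset.sum_congr rfl fun z' _ => ?_
      have hs : (∑ i, X i * (z i + z' i)) = (∑ i, X i * z i) + (∑ i, X i * z' i) := by
        rw [← Finset.sum_add_distrib]
        exact Finset.sum_congr rfl fun i _ => mul_add _ _ _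
      rw [hs, eSign_add]; ring
    simp only [expand]
    rw [Finset.sum_comm]
    have inner : ∀ z : Fin m → ZMod 2,
        (∑ X : Fin m → ZMod 2, ∑ z', eSign (∑ i, X i * (z i + z' i)) * (d z * d z'))
        = 2 ^ m * d z ^ 2 := by
      intro z
      rw [Finset.sum_comm]
      have step : ∀ z' : Fin m → ZMod 2,
          (∑ X : Fin m → ZMod 2, eSign (∑ i, X i * (z i + z' i)) * (d z * d z'))
          = (if z' = z then (2:ℝ) ^ m else 0) * (d z * d z') := by
        intro z'
        rw [← Finset.sum_mul, char_sum]
        have hcond : ((fun i => z i + z' i) = (0 : Fin m → ZMod 2)) ↔ z' = z := by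
          constructor
          · intro hf
            funext i
            have h1 := congrFun hf i
            have h2 := (by decide : ∀ a b : ZMod 2, a + b = 0 ↔ a = b)
            exact ((h2 _ _).mp h1).symm
          · intro hf
            subst hf
            funext i
            exact CharTwo.add_self_eq_zero _
        rw [if_congr hcond rfl rfl]
      simp only [step]
      simp only [ite_mul, zero_mul]
      rw [Finset.sum_ite_eq' Finset.univ z (fun x => (2:ℝ) ^ m * (d z * d x))]
      simp only [Finset.mem_univ, if_true]
      ring
    rw [Finset.sum_congr rfl fun z _ => inner z, ← Finset.mul_sum]
  -- conclude
  have hsum : ∑ z, d z ^ 2 ≤ (2 * ε) ^ 2 := by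
    have hb : ∑ X : Fin m → ZMod 2, (F X) ^ 2
        ≤ ∑ X : Fin m → ZMod 2, (2 * ε) ^ 2 := by
      refine Finset.sum_le_sum fun X _ => ?_
      calc (F X) ^ 2 = |F X| ^ 2 := (sq_abs _).symm
        _ ≤ (2 * ε) ^ 2 := by
            apply pow_le_pow_left₀ (abs_nonneg _) (hFb X)
    rw [pars] at hb
    rw [Finset.sum_const, Finset.card_univ] at hb
    have hcard : Fintype.card (Fin m → ZMod 2) = 2 ^ m := by
      simp [Fintype.card_fun]
    rw [hcard, nsmul_eq_mul] at hb
    have h2m : (0:ℝ) < 2 ^ m := by positivity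
    push_cast at hb
    nlinarith
  calc Real.sqrt (∑ z, (P z - P' z) ^ 2) ≤ Real.sqrt ((2 * ε) ^ 2) :=
        Real.sqrt_le_sqrt hsum
    _ = 2 * ε := by rw [Real.sqrt_sq (by positivity)]
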